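/- For a BIBD(v,k,λ,r,b), one necessarily has b ≥ v (Fisher's inequality). -/

import Mathlib

/-- **Fisher's inequality.** For a `BIBD(v,k,λ,r,b)` one necessarily has `b ≥ v`. -/
theorem fisher_inequality (v k lam r b : ℕ) (hvk : k < v) (hk : 0 < k) (hb : 0 < b)
    (B : Fin b → Finset (Fin v))
    (hcard : ∀ i, (B i).card = k)
    (hdeg : ∀ x : Fin v, (Finset.univ.filter fun i => x ∈ B i).card = r)
    (hpair : ∀ x y : Fin v, x ≠ y →
      (Finset.univ.filter fun i => x ∈ B i ∧ y ∈ B i).card = lam) :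
    v ≤ b := by
  -- r > 0
  have hv : 0 < v := lt_of_le_of_lt (Nat.zero_le k) hvk
  have hr : 0 < r := by
    obtain ⟨x, hx⟩ := Finset.card_pos.mp (by rw [hcard ⟨0, hb⟩]; exact hk)
    rw [← hdeg x]
    exact Finset.card_pos.mpr ⟨⟨0, hb⟩, by simp [hx]⟩
  -- counting identity: r * (k-1) = lam * (v-1)
  have hx0 : ∃ x0 : Fin v, True := ⟨⟨0, hv⟩, trivial⟩
  obtain ⟨x0, -⟩ := hx0
  have hcount : r * (k - 1) = lam * (v - 1) := by
    have key : ∑ i : Fin b, ∑ y ∈ Finset.univ.erase x0,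
        (if x0 ∈ B i ∧ y ∈ B i then 1 else 0) = r * (k - 1) := by
      have : ∀ i : Fin b, ∑ y ∈ Finset.univ.erase x0,
          (if x0 ∈ B i ∧ y ∈ B i then 1 else 0) = if x0 ∈ B i then k - 1 else 0 := by
        intro i
        by_cases hx : x0 ∈ B i
        · simp only [hx, true_and, if_pos]
          rw [Finset.sum_ite_mem, Finset.sum_const, smul_eq_mul, mul_one]
          rw [Finset.erase_inter, Finset.univ_inter, Finset.card_erase_of_mem hx, hcard]
        · simp [hx]
      rw [Finset.sum_congr rfl fun i _ => this i, Finset.sum_ite, Finset.sum_const,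
        Finset.sum_const_zero, add_zero, smul_eq_mul, hdeg x0]
    have key2 : ∑ y ∈ Finset.univ.erase x0, ∑ i : Fin b,
        (if x0 ∈ B i ∧ y ∈ B i then 1 else 0) = lam * (v - 1) := by
      have : ∀ y ∈ Finset.univ.erase x0, ∑ i : Fin b,
          (if x0 ∈ B i ∧ y ∈ B i then 1 else 0) = lam := by
        intro y hy
        rw [Finset.sum_boole]
        have := hpair x0 y (Ne.symm (Finset.ne_of_mem_erase hy))
        simpa using congrArg (Nat.cast : ℕ → ℕ) this
      rw [Finset.sum_congr rfl this, Finset.sum_const, smul_eq_mul,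
        Finset.card_erase_of_mem (Finset.mem_univ x0)]
      simp [mul_comm]
    rw [← key, Finset.sum_comm, key2]
  -- lam < r
  have hlr : lam < r := by
    by_contra h
    push_neg at h
    have h1 : r * (v - 1) ≤ lam * (v - 1) := Nat.mul_le_mul_right _ h
    have h2 : r * (k - 1) < r * (v - 1) := by
      exact mul_lt_mul_of_pos_left (by omega) hr
    omega
  -- incidence matrix
  set A : Matrix (Fin b) (Fin v) ℚ := fun i x => if x ∈ B i then 1 else 0 with hA
  have hinj : Function.Injective A.mulVecLin := by
    rw [← LinearMap.ker_eq_bot, LinearMap.ker_eq_bot']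
    intro f hf
    have hf' : ∀ i : Fin b, ∑ x : Fin v, (if x ∈ B i then f x else 0) = 0 := by
      intro i
      have := congrFun (show A.mulVec f = 0 from hf) i
      simpa [Matrix.mulVecLin_apply, Matrix.mulVec, dotProduct, hA, ite_mul, one_mul,
        zero_mul] using this
    -- sum of squares
    have expand : (0 : ℚ) = (r - lam) * ∑ x : Fin v, (f x)^2
        + lam * (∑ x : Fin v, f x)^2 := by
      have e1 : (0 : ℚ) = ∑ i : Fin b,
          (∑ x : Fin v, (if x ∈ B i then f x else 0))
          * (∑ y : Fin v, (if y ∈ B i then f y else 0)) := by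
        simp [hf']
      rw [e1]
      have e2 : ∀ i : Fin b,
          (∑ x : Fin v, (if x ∈ B i then f x else 0))
          * (∑ y : Fin v, (if y ∈ B i then f y else 0))
          = ∑ x : Fin v, ∑ y : Fin v,
            (if x ∈ B i ∧ y ∈ B i then f x * f y else 0) := by
        intro i
        rw [Finset.sum_mul_sum]
        apply Finset.sum_congr rfl; intro x _
        apply Finset.sum_congr rfl; intro y _
        by_cases hx : x ∈ B i <;> by_cases hy : y ∈ B i <;> simp [hx, hy]
      rw [Finset.sum_congr rfl fun i _ => e2 i, Finset.sum_comm]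
      have e3 : ∀ x : Fin v, ∑ i : Fin b, ∑ y : Fin v,
          (if x ∈ B i ∧ y ∈ B i then f x * f y else 0)
          = (r : ℚ) * (f x)^2 + lam * ∑ y ∈ Finset.univ.erase x, f x * f y := by
        intro x
        rw [Finset.sum_comm]
        have e4 : ∀ y : Fin v, ∑ i : Fin b, (if x ∈ B i ∧ y ∈ B i then f x * f y else 0)
            = ((Finset.univ.filter fun i => x ∈ B i ∧ y ∈ B i).card : ℚ) * (f x * f y) := by
          intro y
          rw [Finset.sum_ite, Finset.sum_const, Finset.sum_const_zero, add_zero,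
            nsmul_eq_mul]
        rw [Finset.sum_congr rfl fun y _ => e4 y]
        rw [← Finset.sum_erase_add _ _ (Finset.mem_univ x)]
        have hxx : ((Finset.univ.filter fun i => x ∈ B i ∧ x ∈ B i).card : ℚ) = r := by
          simp only [and_self, hdeg x]
        have hxy : ∀ y ∈ Finset.univ.erase x,
            ((Finset.univ.filter fun i => x ∈ B i ∧ y ∈ B i).card : ℚ) * (f x * f y)
            = lam * (f x * f y) := by
          intro y hy
          rw [hpair x y (Ne.symm (Finset.ne_of_mem_erase hy))]
        rw [Finset.sum_congr rfl hxy, hxx, ← Finset.mul_sum]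
        ring
      rw [Finset.sum_congr rfl fun x _ => e3 x, Finset.sum_add_distrib, ← Finset.mul_sum,
        ← Finset.mul_sum]
      have e5 : ∑ x : Fin v, ∑ y ∈ Finset.univ.erase x, f x * f y
          = (∑ x : Fin v, f x)^2 - ∑ x : Fin v, (f x)^2 := by
        have : ∀ x : Fin v, ∑ y ∈ Finset.univ.erase x, f x * f y
            = f x * (∑ y : Fin v, f y) - (f x)^2 := by
          intro x
          rw [← Finset.mul_sum, Finset.sum_erase_eq_sub (Finset.mem_univ x)]
          ring
        rw [Finset.sum_congr rfl fun x _ => this x, Finset.sum_sub_distrib,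
          ← Finset.sum_mul, sq]
      rw [e5]
      ring
    have hrl : (0 : ℚ) < (r : ℚ) - lam := by
      have : (lam : ℚ) < r := by exact_mod_cast hlr
      linarith
    have h1 : (0 : ℚ) ≤ ∑ x : Fin v, (f x)^2 :=
      Finset.sum_nonneg fun x _ => sq_nonneg _
    have h2 : (0 : ℚ) ≤ (lam : ℚ) * (∑ x : Fin v, f x)^2 :=
      mul_nonneg (Nat.cast_nonneg _) (sq_nonneg _)
    have hsq : ∑ x : Fin v, (f x)^2 = 0 := by nlinarith
    funext x
    have := (Finset.sum_eq_zero_iff_of_nonneg (fun y _ => sq_nonneg (f y))).mp hsq x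
      (Finset.mem_univ x)
    have : (f x)^2 = 0 := this
    simpa using pow_eq_zero_iff (n := 2) (by norm_num) |>.mp this
  have := LinearMap.finrank_le_finrank_of_injective hinj
  simpa [Module.finrank_fintype_fun_eq_card] using this
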